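/- The free group on any nonempty type of generators is left-orderable. -/

import Mathlib

namespace MagnusOrd

variable {α : Type*}

/-- Noncommutative "power series" on words over `α` with integer coefficients. -/
def A (α : Type*) : Type _ := List α → ℤ

instance : AddCommGroup (A α) := inferInstanceAs (AddCommGroup (List α → ℤ))

def mulA (f g : A α) : A α :=
  fun w => ∑ i ∈ Finset.range (w.length + 1), f (w.take i) * g (w.drop i)

def oneA : A α := fun w => match w with | [] => 1 | _ => 0

@[simp] lemma oneA_nil : (oneA : A α) [] = 1 := rfl
@[simp] lemma oneA_cons (a : α) (w : List α) : (oneA : A α) (a :: w) = 0 := rfl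
lemma oneA_ne_nil {w : List α} (h : w ≠ []) : (oneA : A α) w = 0 := by
  cases w with
  | nil => exact absurd rfl h
  | cons a w => rfl

@[simp] lemma add_apply (f g : A α) (w : List α) : (f + g) w = f w + g w := rfl
@[simp] lemma neg_apply (f : A α) (w : List α) : (-f) w = -(f w) := rfl
@[simp] lemma sub_apply (f g : A α) (w : List α) : (f - g) w = f w - g w := rfl
@[simp] lemma zero_apply (w : List α) : (0 : A α) w = 0 := rfl

lemma mulA_nil (f g : A α) : mulA f g [] = f [] * g [] := by
  simp [mulA]

lemma mulA_cons (f g : A α) (a : α) (w : List α) :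
    mulA f g (a :: w) = f [] * g (a :: w) + mulA (fun u => f (a :: u)) g w := by
  simp only [mulA, List.length_cons]
  rw [Finset.sum_range_succ']
  simp [List.take_succ_cons, List.drop_succ_cons, add_comm]

lemma mulA_zero (f : A α) : mulA f 0 = 0 := by
  funext w; simp [mulA]

lemma zero_mulA (f : A α) : mulA 0 f = 0 := by
  funext w; simp [mulA]

lemma mulA_add (f g h : A α) : mulA f (g + h) = mulA f g + mulA f h := by
  funext w; simp [mulA, mul_add, Finset.sum_add_distrib]

lemma add_mulA (f g h : A α) : mulA (f + g) h = mulA f h + mulA g h := by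
  funext w; simp [mulA, add_mul, Finset.sum_add_distrib]

lemma constMul_mulA (c : ℤ) (f g : A α) (w : List α) :
    mulA (fun u => c * f u) g w = c * mulA f g w := by
  simp [mulA, Finset.mul_sum, mul_assoc]

lemma mulA_assoc (f g h : A α) : mulA (mulA f g) h = mulA f (mulA g h) := by
  funext w
  induction w generalizing f g h with
  | nil => simp [mulA_nil, mul_assoc]
  | cons a w ih =>
    rw [mulA_cons, mulA_cons]
    set t1 : A α := (fun u => f [] * g (a :: u)) with ht1
    have h1 : (fun u => mulA f g (a :: u)) = t1 + mulA (fun v => f (a :: v)) g := by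
      funext u; rw [mulA_cons]; rfl
    rw [h1, add_mulA, add_apply]
    have h2 : mulA t1 h w = f [] * mulA (fun u => g (a :: u)) h w := by
      rw [ht1]; exact constMul_mulA (f []) (fun u => g (a :: u)) h w
    rw [h2, ih (fun v => f (a :: v)), mulA_cons g h a w, mulA_nil]
    ring

lemma oneA_mulA (f : A α) : mulA oneA f = f := by
  funext w
  cases w with
  | nil => simp [mulA_nil]
  | cons a w =>
    rw [mulA_cons]
    have : (fun u => (oneA : A α) (a :: u)) = (0 : A α) := by
      funext u; rfl
    rw [this, zero_mulA]
    simp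

lemma mulA_oneA (f : A α) : mulA f oneA = f := by
  funext w
  rw [mulA, Finset.sum_eq_single w.length]
  · simp
  · intro i hi hne
    have hi' : i < w.length := by
      have := Finset.mem_range.mp hi; omega
    have hd : w.drop i ≠ [] := by
      simp only [ne_eq, List.drop_eq_nil_iff]; omega
    rw [oneA_ne_nil hd, mul_zero]
  · intro h
    exact absurd (Finset.self_mem_range_succ w.length) h

instance : Ring (A α) :=
  { (inferInstance : AddCommGroup (A α)) with
    mul := mulA
    one := oneA
    mul_assoc := mulA_assoc
    one_mul := oneA_mulA
    mul_one := mulA_oneA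
    left_distrib := mulA_add
    right_distrib := fun a b c => add_mulA a b c
    zero_mul := zero_mulA
    mul_zero := mulA_zero }

lemma mul_def (f g : A α) : f * g = mulA f g := rfl
lemma one_def : (1 : A α) = oneA := rfl

@[simp] lemma one_apply_nil : (1 : A α) [] = 1 := rfl
@[simp] lemma one_apply_cons (a : α) (w : List α) : (1 : A α) (a :: w) = 0 := rfl
lemma one_apply_ne_nil {w : List α} (h : w ≠ []) : (1 : A α) w = 0 := oneA_ne_nil h

lemma mul_apply (f g : A α) (w : List α) :
    (f * g) w = ∑ i ∈ Finset.range (w.length + 1), f (w.take i) * g (w.drop i) := rfl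

end MagnusOrd

namespace MagnusOrd
section Units
variable {α : Type*} [DecidableEq α]

def X (a : α) : A α := fun w => if w = [a] then 1 else 0

def onePlusX (a : α) : A α := 1 + X a

def geom (a : α) : A α := fun w => if w = List.replicate w.length a then (-1) ^ w.length else 0

@[simp] lemma onePlusX_nil (a : α) : onePlusX a [] = 1 := by simp [onePlusX, X]
@[simp] lemma geom_nil (a : α) : geom a [] = 1 := by simp [geom]

lemma onePlusX_cons (a b : α) (t : List α) :
    onePlusX a (b :: t) = if b = a ∧ t = [] then 1 else 0 := by
  simp only [onePlusX, X, add_apply, one_apply_cons, zero_add]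
  by_cases hb : b = a <;> by_cases ht : t = [] <;> simp [hb, ht]

lemma onePlusX_mul_nil (a : α) (g : A α) : (onePlusX a * g) [] = g [] := by
  rw [mul_def, mulA_nil]; simp

lemma onePlusX_mul_cons (a b : α) (g : A α) (t : List α) :
    (onePlusX a * g) (b :: t) = g (b :: t) + if b = a then g t else 0 := by
  rw [mul_def, mulA_cons]
  have h1 : (fun u => onePlusX a (b :: u)) = (if b = a then (1 : A α) else 0) := by
    funext u
    rw [onePlusX_cons]
    by_cases hb : b = a
    · cases u with
      | nil => simp [hb]
      | cons c s => simp [hb]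
    · simp [hb]
  rw [h1]
  by_cases hb : b = a <;> simp [hb, ← mul_def, oneA_mulA, zero_mulA]

lemma geom_cons (a : α) (t : List α) : geom a (a :: t) = - geom a t := by
  simp only [geom, List.length_cons, List.replicate_succ, List.cons.injEq, true_and]
  by_cases h : t = List.replicate t.length a
  · rw [if_pos h, if_pos h, pow_succ]; ring
  · rw [if_neg h, if_neg h, neg_zero]

lemma geom_cons_ne (a b : α) (t : List α) (h : b ≠ a) : geom a (b :: t) = 0 := by
  simp only [geom, List.length_cons, List.replicate_succ, List.cons.injEq]
  simp [h]

lemma onePlusX_mul_geom (a : α) : onePlusX a * geom a = 1 := by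
  funext w
  cases w with
  | nil => rw [onePlusX_mul_nil, geom_nil, one_apply_nil]
  | cons b t =>
    rw [onePlusX_mul_cons]
    by_cases hb : b = a
    · subst hb
      rw [geom_cons]
      simp
    · rw [geom_cons_ne a b t hb]
      simp [hb]

lemma geom_mul_onePlusX (a : α) : geom a * onePlusX a = 1 := by
  funext w
  induction w with
  | nil => rw [mul_def, mulA_nil, geom_nil, onePlusX_nil, one_apply_nil, one_mul]
  | cons b t ih =>
    rw [mul_def, mulA_cons]
    by_cases hb : b = a
    · subst hb
      have h1 : (fun u => geom b (b :: u)) = -(geom b) := by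
        funext u; rw [geom_cons]; rfl
      rw [h1, ← mul_def, neg_mul, neg_apply, ih]
      simp only [geom_nil, one_mul, neg_apply]
      rw [onePlusX_cons]
      cases t with
      | nil => simp
      | cons c s => simp
    · have h1 : (fun u => geom a (b :: u)) = (0 : A α) := by
        funext u; exact geom_cons_ne a b u hb
      rw [h1, zero_mulA, onePlusX_cons]
      simp [hb]

def xi (a : α) : (A α)ˣ := ⟨onePlusX a, geom a, onePlusX_mul_geom a, geom_mul_onePlusX a⟩

/-- The Magnus homomorphism. -/
def Phi : FreeGroup α →* (A α)ˣ := FreeGroup.lift (fun a => xi a)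

@[simp] lemma Phi_of (a : α) : Phi (FreeGroup.of a) = xi a := FreeGroup.lift_apply_of

/-- Property: supported on powers of `a`, with constant term 1. -/
def Qc (a : α) (u : (A α)ˣ) : Prop :=
  (u : A α) [] = 1 ∧ ∀ w : List α, (u : A α) w ≠ 0 → w = List.replicate w.length a

lemma Qc_one (a : α) : Qc a (1 : (A α)ˣ) := by
  constructor
  · rw [Units.val_one, one_apply_nil]
  · intro w hw
    rw [Units.val_one] at hw
    rcases w with _ | ⟨b, t⟩
    · rfl
    · exact absurd (one_apply_cons b t) hw

lemma Qc_mul (a : α) {u v : (A α)ˣ} (hu : Qc a u) (hv : Qc a v) : Qc a (u * v) := by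
  constructor
  · rw [Units.val_mul, mul_def, mulA_nil, hu.1, hv.1, one_mul]
  · intro w hw
    rw [Units.val_mul, mul_def] at hw
    obtain ⟨i, hi, hne⟩ := Finset.exists_ne_zero_of_sum_ne_zero hw
    have h1 : (u : A α) (w.take i) ≠ 0 := fun h => hne (by rw [h, zero_mul])
    have h2 : (v : A α) (w.drop i) ≠ 0 := fun h => hne (by rw [h, mul_zero])
    have e1 := hu.2 _ h1
    have e2 := hv.2 _ h2
    calc w = w.take i ++ w.drop i := (List.take_append_drop i w).symm
    _ = List.replicate (w.take i).length a ++ List.replicate (w.drop i).length a := by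
        rw [← e1, ← e2]
    _ = List.replicate w.length a := by
        rw [← List.replicate_add, List.length_take, List.length_drop]
        congr 1
        have := Finset.mem_range.mp hi
        omega

lemma Qc_inv (a : α) {u : (A α)ˣ} (hu : Qc a u) : Qc a u⁻¹ := by
  have hval : ∀ w : List α, ((u : A α) * ((u⁻¹ : (A α)ˣ) : A α)) w = (1 : A α) w := by
    intro w; rw [← Units.val_mul, mul_inv_cancel, Units.val_one]
  have hnil : ((u⁻¹ : (A α)ˣ) : A α) [] = 1 := by
    have := hval []
    rw [mul_def, mulA_nil, hu.1, one_mul] at this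
    simpa [one_def] using this
  refine ⟨hnil, ?_⟩
  suffices h : ∀ n : ℕ, ∀ w : List α, w.length ≤ n →
      ((u⁻¹ : (A α)ˣ) : A α) w ≠ 0 → w = List.replicate w.length a by
    intro w; exact h w.length w le_rfl
  intro n
  induction n with
  | zero =>
    intro w hw _
    rw [Nat.le_zero, List.length_eq_zero_iff] at hw
    subst hw; rfl
  | succ n ih =>
    rintro (_ | ⟨b, t⟩) hlen hw
    · rfl
    · have := hval (b :: t)
      rw [mul_def, mulA_cons, hu.1, one_mul] at this
      rw [one_apply_cons] at this
      have hsum : mulA (fun x => (u : A α) (b :: x)) ((u⁻¹ : (A α)ˣ) : A α) t ≠ 0 := by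
        intro h
        rw [h] at this
        exact hw (by linarith)
      simp only [mulA] at hsum
      obtain ⟨i, hi, hne⟩ := Finset.exists_ne_zero_of_sum_ne_zero hsum
      have h1 : (u : A α) (b :: t.take i) ≠ 0 := fun h => hne (by rw [h, zero_mul])
      have h2 : ((u⁻¹ : (A α)ˣ) : A α) (t.drop i) ≠ 0 := fun h => hne (by rw [h, mul_zero])
      have e1 := hu.2 _ h1
      have e2 : t.drop i = List.replicate (t.drop i).length a := by
        refine ih (t.drop i) ?_ h2
        have : (t.drop i).length ≤ t.length := by
          rw [List.length_drop]; omega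
        simp only [List.length_cons] at hlen
        omega
      calc b :: t = (b :: t.take i) ++ t.drop i := by rw [List.cons_append, List.take_append_drop]
      _ = List.replicate (b :: t.take i).length a ++ List.replicate (t.drop i).length a := by
          rw [← e1, ← e2]
      _ = List.replicate (b :: t).length a := by
          rw [← List.replicate_add]
          congr 1
          simp only [List.length_cons, List.length_take, List.length_drop]
          omega

end Units
end MagnusOrd

namespace MagnusOrd
section Powers
variable {α : Type*} [DecidableEq α]

lemma val_xi (a : α) : ((xi a : (A α)ˣ) : A α) = onePlusX a := rfl
lemma val_xi_inv (a : α) : (((xi a)⁻¹ : (A α)ˣ) : A α) = geom a := rfl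

lemma geom_mul_cons (a : α) (g : A α) (t : List α) :
    (geom a * g) (a :: t) = g (a :: t) - (geom a * g) t := by
  rw [mul_def, mulA_cons, geom_nil, one_mul]
  have h1 : (fun u => geom a (a :: u)) = -(geom a) := by
    funext u; rw [geom_cons]; rfl
  rw [h1, ← mul_def, neg_mul, neg_apply, sub_eq_add_neg]
  rfl

lemma Qc_xi (a : α) : Qc a (xi a) := by
  constructor
  · exact onePlusX_nil a
  · intro w hw
    rcases w with _ | ⟨b, t⟩
    · rfl
    · rw [val_xi, onePlusX_cons] at hw
      by_cases hb : b = a ∧ t = []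
      · obtain ⟨rfl, rfl⟩ := hb
        rfl
      · rw [if_neg hb] at hw
        exact absurd rfl hw

lemma Qc_zpow (a : α) (e : ℤ) : Qc a (xi a ^ e) := by
  have hn : ∀ n : ℕ, Qc a (xi a ^ n) := by
    intro n
    induction n with
    | zero => simpa using Qc_one a
    | succ n ih => rw [pow_succ]; exact Qc_mul a ih (Qc_xi a)
  cases e with
  | ofNat n => rw [Int.ofNat_eq_coe, zpow_natCast]; exact hn n
  | negSucc n => rw [zpow_negSucc]; exact Qc_inv a (hn (n + 1))

lemma zpow_nil (a : α) (e : ℤ) : ((xi a ^ e : (A α)ˣ) : A α) [] = 1 := (Qc_zpow a e).1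

lemma zpow_support (a : α) (e : ℤ) {w : List α}
    (h : ((xi a ^ e : (A α)ˣ) : A α) w ≠ 0) : w = List.replicate w.length a :=
  (Qc_zpow a e).2 w h

lemma zpow_single (a : α) (e : ℤ) : ((xi a ^ e : (A α)ˣ) : A α) [a] = e := by
  induction e using Int.induction_on with
  | zero => rw [zpow_zero, Units.val_one, one_apply_cons]
  | succ n ih =>
    have h1 : ((n : ℤ) + 1) = 1 + (n : ℤ) := add_comm _ _
    rw [h1, zpow_add, zpow_one, Units.val_mul, val_xi, onePlusX_mul_cons, if_pos rfl,
      zpow_nil, ih]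
    push_cast; ring
  | pred n ih =>
    have h1 : (-(n : ℤ) - 1) = (-1) + (-(n : ℤ)) := by ring
    rw [h1, zpow_add, zpow_neg_one, Units.val_mul, val_xi_inv, geom_mul_cons]
    have h2 : (geom a * ((xi a ^ (-(n:ℤ)) : (A α)ˣ) : A α)) [] = 1 := by
      rw [mul_def, mulA_nil, geom_nil, one_mul, zpow_nil]
    rw [h2, ih]
    ring

lemma Phi_nil (g : FreeGroup α) : ((Phi g : (A α)ˣ) : A α) [] = 1 := by
  induction g using FreeGroup.induction_on with
  | C1 => rw [map_one, Units.val_one, one_apply_nil]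
  | of x =>
    rw [Phi_of, val_xi, onePlusX_nil]
  | inv_of x _ =>
    rw [map_inv, Phi_of, val_xi_inv,
      geom_nil]
  | mul x y hx hy => rw [map_mul, Units.val_mul, mul_def, mulA_nil, hx, hy, one_mul]

end Powers
end MagnusOrd

namespace MagnusOrd
section Pos
variable {α : Type*}

/-- Positivity: the lowest-order coefficient (by length, then by a fixed well-order on
words) is positive. -/
def Pos (u : A α) : Prop :=
  u [] = 0 ∧ ∃ w : List α, 0 < u w ∧ (∀ v : List α, v.length < w.length → u v = 0) ∧
    (∀ v : List α, v.length = w.length → WellOrderingRel v w → u v = 0)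

lemma not_pos_zero : ¬ Pos (0 : A α) := by
  rintro ⟨-, w, hw, -⟩
  exact lt_irrefl 0 hw

lemma Pos.len_pos {u : A α} (h0 : u [] = 0) {w : List α} (hw : 0 < u w) : 1 ≤ w.length := by
  rcases w with _ | ⟨a, t⟩
  · rw [h0] at hw; exact absurd hw (lt_irrefl 0)
  · simp

lemma lowMul (u v : A α) {m n : ℕ} (hu : ∀ x : List α, x.length < m → u x = 0)
    (hv : ∀ x : List α, x.length < n → v x = 0) :
    ∀ w : List α, w.length < m + n → (u * v) w = 0 := by
  intro w hw
  rw [mul_apply]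
  apply Finset.sum_eq_zero
  intro i hi
  have hi' : i ≤ w.length := by have := Finset.mem_range.mp hi; omega
  by_cases h : i < m
  · rw [hu (w.take i) (by rw [List.length_take]; omega), zero_mul]
  · rw [hv (w.drop i) (by rw [List.length_drop]; omega), mul_zero]

lemma pos_mul_pos {u v : A α} (hu : Pos u) (hv : Pos v) : Pos (u + v + u * v) := by
  obtain ⟨hu0, wu, hup, hul, hum⟩ := hu
  obtain ⟨hv0, wv, hvp, hvl, hvm⟩ := hv
  have hmu : 1 ≤ wu.length := Pos.len_pos hu0 hup
  have hmv : 1 ≤ wv.length := Pos.len_pos hv0 hvp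
  have huv0 : ∀ x : List α, x.length < wu.length + wv.length → (u * v) x = 0 :=
    lowMul u v hul hvl
  have h00 : (u + v + u * v) [] = 0 := by
    rw [add_apply, add_apply, hu0, hv0, mul_def, mulA_nil, hu0, zero_mul, add_zero, add_zero]
  refine ⟨h00, ?_⟩
  rcases lt_trichotomy wu.length wv.length with h | h | h
  · refine ⟨wu, ?_, ?_, ?_⟩
    · rw [add_apply, add_apply, hvl wu h, huv0 wu (by omega), add_zero, add_zero]; exact hup
    · intro x hx
      rw [add_apply, add_apply, hul x hx, hvl x (by omega), huv0 x (by omega)]; ring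
    · intro x hx hr
      rw [add_apply, add_apply, hum x hx hr, hvl x (by omega), huv0 x (by omega)]; ring
  · rcases trichotomous (r := WellOrderingRel) wu wv with hr | rfl | hr
    · refine ⟨wu, ?_, ?_, ?_⟩
      · rw [add_apply, add_apply, hvm wu h hr, huv0 wu (by omega), add_zero, add_zero]
        exact hup
      · intro x hx
        rw [add_apply, add_apply, hul x hx, hvl x (by omega), huv0 x (by omega)]; ring
      · intro x hx hr'
        rw [add_apply, add_apply, hum x hx hr', hvm x (by omega) (_root_.trans hr' hr),
          huv0 x (by omega)]
        ring
    · refine ⟨wu, ?_, ?_, ?_⟩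
      · rw [add_apply, add_apply, huv0 wu (by omega), add_zero]; positivity
      · intro x hx
        rw [add_apply, add_apply, hul x hx, hvl x (by omega), huv0 x (by omega)]; ring
      · intro x hx hr'
        rw [add_apply, add_apply, hum x hx hr', hvm x (by omega) hr', huv0 x (by omega)]; ring
    · refine ⟨wv, ?_, ?_, ?_⟩
      · rw [add_apply, add_apply, hum wv h.symm hr, huv0 wv (by omega), add_zero, zero_add]
        exact hvp
      · intro x hx
        rw [add_apply, add_apply, hul x (by omega), hvl x hx, huv0 x (by omega)]; ring
      · intro x hx hr'
        rw [add_apply, add_apply, hum x (by omega) (_root_.trans hr' hr), hvm x hx hr',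
          huv0 x (by omega)]
        ring
  · refine ⟨wv, ?_, ?_, ?_⟩
    · rw [add_apply, add_apply, hul wv h, huv0 wv (by omega), add_zero, zero_add]; exact hvp
    · intro x hx
      rw [add_apply, add_apply, hul x (by omega), hvl x hx, huv0 x (by omega)]; ring
    · intro x hx hr
      rw [add_apply, add_apply, hul x (by omega), hvm x hx hr, huv0 x (by omega)]; ring

lemma neg_neg_mul {u v : A α} (hu : Pos (-u)) (hv : Pos (-v)) : u + v + u * v ≠ 0 := by
  obtain ⟨hu0, wu, hup, hul, hum⟩ := hu
  obtain ⟨hv0, wv, hvp, hvl, hvm⟩ := hv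
  simp only [neg_apply, neg_eq_zero, Left.nonneg_neg_iff, neg_pos] at hu0 hv0 hup hvp
  have hul' : ∀ x : List α, x.length < wu.length → u x = 0 := by
    intro x hx; have := hul x hx; rwa [neg_apply, neg_eq_zero] at this
  have hvl' : ∀ x : List α, x.length < wv.length → v x = 0 := by
    intro x hx; have := hvl x hx; rwa [neg_apply, neg_eq_zero] at this
  have hum' : ∀ x : List α, x.length = wu.length → WellOrderingRel x wu → u x = 0 := by
    intro x hx hr; have := hum x hx hr; rwa [neg_apply, neg_eq_zero] at this
  have hvm' : ∀ x : List α, x.length = wv.length → WellOrderingRel x wv → v x = 0 := by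
    intro x hx hr; have := hvm x hx hr; rwa [neg_apply, neg_eq_zero] at this
  have hmu : 1 ≤ wu.length := by
    rcases wu with _ | _
    · rw [hu0] at hup; exact absurd hup (lt_irrefl 0)
    · simp
  have hmv : 1 ≤ wv.length := by
    rcases wv with _ | _
    · rw [hv0] at hvp; exact absurd hvp (lt_irrefl 0)
    · simp
  have huv0 : ∀ x : List α, x.length < wu.length + wv.length → (u * v) x = 0 :=
    lowMul u v hul' hvl'
  intro h0
  rcases lt_trichotomy wu.length wv.length with h | h | h
  · have := congrFun h0 wu
    rw [add_apply, add_apply, hvl' wu h, huv0 wu (by omega), zero_apply] at this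
    omega
  · rcases trichotomous (r := WellOrderingRel) wu wv with hr | rfl | hr
    · have := congrFun h0 wu
      rw [add_apply, add_apply, hvm' wu h hr, huv0 wu (by omega), zero_apply] at this
      omega
    · have := congrFun h0 wu
      rw [add_apply, add_apply, huv0 wu (by omega), zero_apply] at this
      omega
    · have := congrFun h0 wv
      rw [add_apply, add_apply, hum' wv h.symm hr, huv0 wv (by omega), zero_apply] at this
      omega
  · have := congrFun h0 wv
    rw [add_apply, add_apply, hul' wv h, huv0 wv (by omega), zero_apply] at this
    omega

lemma pos_or_pos_neg {u : A α} (h0 : u [] = 0) (hne : u ≠ 0) : Pos u ∨ Pos (-u) := by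
  have hex : ∃ n : ℕ, ∃ w : List α, w.length = n ∧ u w ≠ 0 := by
    obtain ⟨w, hw⟩ := Function.ne_iff.mp hne
    exact ⟨w.length, w, rfl, hw⟩
  classical
  set n0 := Nat.find hex with hn0
  obtain ⟨w1, hw1len, hw1⟩ := Nat.find_spec hex
  have hwf : WellFounded (WellOrderingRel : List α → List α → Prop) := IsWellFounded.wf
  set S : Set (List α) := {w : List α | w.length = n0 ∧ u w ≠ 0} with hS
  have hSne : S.Nonempty := ⟨w1, hw1len, hw1⟩
  set w0 := hwf.min S hSne with hw0
  have hmem : w0 ∈ S := hwf.min_mem S hSne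
  have hlow : ∀ v : List α, v.length < w0.length → u v = 0 := by
    intro v hv
    by_contra hvne
    have h1 : w0.length = n0 := hmem.1
    exact Nat.find_min hex (m := v.length) (by omega) ⟨v, rfl, hvne⟩
  have hmin : ∀ v : List α, v.length = w0.length → WellOrderingRel v w0 → u v = 0 := by
    intro v hv hr
    by_contra hvne
    have h1 : w0.length = n0 := hmem.1
    exact hwf.not_lt_min S (show v ∈ S from ⟨by omega, hvne⟩) hr
  rcases lt_trichotomy 0 (u w0) with h | h | h
  · exact Or.inl ⟨h0, w0, h, hlow, hmin⟩
  · exact absurd h.symm hmem.2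
  · refine Or.inr ⟨by rw [neg_apply, h0, neg_zero], w0, ?_, ?_, ?_⟩
    · rw [neg_apply]; omega
    · intro v hv; rw [neg_apply, hlow v hv, neg_zero]
    · intro v hv hr; rw [neg_apply, hmin v hv hr, neg_zero]

end Pos
end MagnusOrd

namespace MagnusOrd
section Magnus
variable {α : Type*} [DecidableEq α]

/-- Non-cancelling adjacency. -/
def Rr : (α × Bool) → (α × Bool) → Prop := fun p q => ¬(p.1 = q.1 ∧ p.2 = !q.2)

lemma reduce_eq_self_of_chain' : ∀ {L : List (α × Bool)}, L.Chain' Rr → FreeGroup.reduce L = L := by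
  intro L h
  induction L with
  | nil => rfl
  | cons x t ih =>
    have ht : FreeGroup.reduce t = t := ih h.tail
    cases t with
    | nil => rfl
    | cons y s =>
      have hxy : Rr x y := (List.isChain_cons_cons.mp h).1
      rw [FreeGroup.reduce.cons, ht]
      exact if_neg hxy

lemma chain'_of_reduce : ∀ {L : List (α × Bool)}, FreeGroup.reduce L = L → L.Chain' Rr := by
  intro L
  induction L with
  | nil => intro _; exact List.isChain_nil
  | cons x t ih =>
    intro h
    rw [FreeGroup.reduce.cons] at h
    cases r : FreeGroup.reduce t with
    | nil =>
      rw [r] at h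
      injection h with _ h2
      rw [← h2]
      exact List.isChain_singleton x
    | cons hd tl =>
      rw [r] at h
      dsimp only [] at h
      by_cases hc : x.1 = hd.1 ∧ x.2 = !hd.2
      · rw [if_pos hc] at h
        exfalso
        have hlen : (FreeGroup.reduce t).length ≤ t.length :=
          FreeGroup.Red.length_le (FreeGroup.reduce.red)
        rw [r] at hlen
        have := congrArg List.length h
        simp only [List.length_cons] at this hlen
        omega
      · rw [if_neg hc] at h
        injection h with _ h2
        subst h2
        exact List.isChain_cons_cons.mpr ⟨hc, ih r⟩

/-- `w` is a concatenation of powers of the letters of `cs`, in order. -/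
def InStars : List α → List α → Prop
  | [], w => w = []
  | c :: cs, w => ∃ m : ℕ, ∃ t : List α, w = List.replicate m c ++ t ∧ InStars cs t

lemma length_le_of_instars : ∀ (cs : List α) (w : List α),
    List.Chain' (· ≠ ·) w → InStars cs w → w.length ≤ cs.length := by
  intro cs
  induction cs with
  | nil =>
    intro w _ h
    rw [show InStars [] w = (w = []) from rfl] at h
    simp [h]
  | cons c cs ih =>
    rintro w hch ⟨m, t, rfl, ht⟩
    have hm : m ≤ 1 := by
      by_contra hm
      push_neg at hm
      obtain ⟨k, rfl⟩ : ∃ k, m = k + 2 := ⟨m - 2, by omega⟩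
      rw [List.replicate_succ, List.replicate_succ, List.cons_append, List.cons_append] at hch
      exact (List.isChain_cons_cons.mp hch).1 rfl
    have hcht : List.Chain' (· ≠ ·) t := (List.isChain_append.mp hch).2.1
    have := ih t hcht ht
    simp only [List.length_append, List.length_replicate, List.length_cons]
    omega

lemma run_const : ∀ (L : List (α × Bool)), L.Chain' Rr → ∀ (c : α) (b : Bool),
    L.head? = some (c, b) → ∀ p ∈ L.takeWhile (fun p => decide (p.1 = c)), p = (c, b) := by
  intro L
  induction L with
  | nil => intro _ c b h; cases h
  | cons x t ih =>
    intro hch c b hh p hp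
    have hx : x = (c, b) := by
      injection hh with hh
    subst hx
    rw [List.takeWhile_cons, if_pos (by simp)] at hp
    rcases List.mem_cons.mp hp with rfl | hp'
    · rfl
    · cases t with
      | nil => simp at hp'
      | cons y s =>
        by_cases hy : y.1 = c
        · have hrel : Rr (c, b) y := (List.isChain_cons_cons.mp hch).1
          have hyb : y.2 = b := by
            rcases hb2 : y.2 <;> rcases hb : b <;> simp_all [Rr]
          have hyeq : y = (c, b) := Prod.ext hy hyb
          exact ih hch.tail c b (by rw [hyeq]; rfl) p hp'
        · rw [List.takeWhile_cons, if_neg (by simp [hy])] at hp'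
          simp at hp'

lemma Phi_mk_replicate (c : α) (b : Bool) (m : ℕ) :
    Phi (FreeGroup.mk (List.replicate m (c, b))) =
      xi c ^ ((if b then 1 else -1 : ℤ) * m) := by
  induction m with
  | zero => simp [← FreeGroup.one_eq_mk]
  | succ m ih =>
    have hsplit : FreeGroup.mk (List.replicate (m + 1) (c, b)) =
        FreeGroup.mk [(c, b)] * FreeGroup.mk (List.replicate m (c, b)) := by
      rw [FreeGroup.mul_mk, List.replicate_succ]; rfl
    have hone : Phi (FreeGroup.mk [(c, b)]) = xi c ^ ((if b then 1 else -1 : ℤ)) := by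
      cases b
      · have : FreeGroup.mk [(c, false)] = (FreeGroup.of c)⁻¹ := by
          rw [show (FreeGroup.of c : FreeGroup α) = FreeGroup.mk [(c, true)] from rfl,
            FreeGroup.inv_mk]
          rfl
        rw [this, map_inv, Phi_of]
        simp
      · rw [show FreeGroup.mk [(c, true)] = FreeGroup.of c from rfl, Phi_of]
        simp
    rw [hsplit, map_mul, hone, ih, ← zpow_add]
    congr 1
    push_cast
    ring

end Magnus
end MagnusOrd

namespace MagnusOrd
section Main
variable {α : Type*} [DecidableEq α]

def Good (g : FreeGroup α) (ω : List α) : Prop :=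
  List.Chain' (· ≠ ·) ω ∧ ((Phi g : (A α)ˣ) : A α) ω ≠ 0 ∧
  (∀ w : List α, ((Phi g : (A α)ˣ) : A α) w ≠ 0 → InStars ω w) ∧
  (ω = [] ↔ g.toWord = []) ∧ ω.head? = g.toWord.head?.map Prod.fst

lemma good_nil {g : FreeGroup α} (hL : g.toWord = []) : Good g [] := by
  have hg1 : g = 1 := FreeGroup.toWord_eq_nil_iff.mp hL
  subst hg1
  refine ⟨List.isChain_nil, ?_, ?_, by simp [hL], by simp [hL]⟩
  · rw [map_one, Units.val_one, one_apply_nil]; exact one_ne_zero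
  · intro w hw
    rw [map_one, Units.val_one] at hw
    cases w with
    | nil => rfl
    | cons a t => exact absurd (one_apply_cons a t) hw

lemma main_good : ∀ (n : ℕ) (g : FreeGroup α), g.toWord.length ≤ n → ∃ ω, Good g ω := by
  intro n
  induction n with
  | zero =>
    intro g hg
    exact ⟨[], good_nil (List.length_eq_zero_iff.mp (Nat.le_zero.mp hg))⟩
  | succ n ih =>
    intro g hg
    cases hL : g.toWord with
    | nil => exact ⟨[], good_nil hL⟩
    | cons x t =>
      obtain ⟨c, b⟩ := x
      have hred : List.Chain' Rr g.toWord := chain'_of_reduce (FreeGroup.reduce_toWord g)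
      set p : α × Bool → Bool := fun q => decide (q.1 = c) with hp
      set r1 := g.toWord.takeWhile p with hr1
      set t1 := g.toWord.dropWhile p with ht1
      have hsplit : r1 ++ t1 = g.toWord := List.takeWhile_append_dropWhile
      have hrc : ∀ q ∈ r1, q = (c, b) :=
        run_const g.toWord hred c b (by rw [hL]; rfl)
      have hr1cons : r1 = (c, b) :: (t.takeWhile p) := by
        rw [hr1, hL, List.takeWhile_cons, if_pos (by simp [hp])]
      have hlr : 1 ≤ r1.length := by rw [hr1cons]; simp
      have hrepl : r1 = List.replicate r1.length (c, b) := List.eq_replicate_iff.mpr ⟨rfl, hrc⟩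
      set e : ℤ := (if b then 1 else -1 : ℤ) * r1.length with he
      have hene : e ≠ 0 := by
        have hl0 : (r1.length : ℤ) ≠ 0 := by exact_mod_cast (by omega : r1.length ≠ 0)
        rw [he]
        exact mul_ne_zero (by rcases b <;> simp) hl0
      set h : FreeGroup α := FreeGroup.mk t1 with hh
      have hgdec : g = FreeGroup.mk r1 * h := by
        rw [hh, FreeGroup.mul_mk, hsplit, FreeGroup.mk_toWord]
      have hPhig : Phi g = xi c ^ e * Phi h := by
        rw [hgdec, map_mul]
        congr 1
        rw [hrepl, Phi_mk_replicate, he]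
      have hcht1 : List.Chain' Rr t1 := by
        have h2 := hred
        rw [← hsplit] at h2
        exact (List.isChain_append.mp h2).2.1
      have htw : h.toWord = t1 := by
        rw [hh, FreeGroup.toWord_mk, reduce_eq_self_of_chain' hcht1]
      have hlen : h.toWord.length ≤ n := by
        rw [htw]
        have h1 := congrArg List.length hsplit
        simp only [List.length_append] at h1
        have h2 : g.toWord.length ≤ n + 1 := hg
        omega
      obtain ⟨ω1, hch1, hne1, hsup1, hiff1, hhead1⟩ := ih h hlen
      cases hω1 : ω1 with
      | nil =>
        subst hω1
        have hPhih : Phi h = 1 := by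
          rw [FreeGroup.toWord_eq_nil_iff.mp (hiff1.mp rfl)]
          exact map_one Phi
        refine ⟨[c], List.isChain_singleton c, ?_, ?_, ?_, ?_⟩
        · rw [hPhig, hPhih, mul_one, zpow_single]; exact hene
        · intro w hw
          rw [hPhig, hPhih, mul_one] at hw
          have hrep := zpow_support c e hw
          exact ⟨w.length, [], by rw [List.append_nil]; exact hrep, rfl⟩
        · exact iff_of_false (by simp) (by rw [hL]; simp)
        · rw [hL]; rfl
      | cons d ω' =>
        subst hω1
        have ht1ne : t1 ≠ [] := by
          intro h0
          have h1 : (d :: ω' : List α) = [] := hiff1.mpr (by rw [htw, h0])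
          cases h1
        obtain ⟨q, t1', hq⟩ := List.exists_cons_of_ne_nil ht1ne
        have hqc : q.1 ≠ c := by
          have h2 := List.head?_dropWhile_not p g.toWord
          rw [← ht1, hq] at h2
          simp only [List.head?_cons] at h2
          intro hqq
          rw [hp] at h2
          simp [hqq] at h2
        have hd_eq : d = q.1 := by
          have h2 := hhead1
          rw [htw, hq] at h2
          simp only [List.head?_cons, Option.map_some] at h2
          exact Option.some.inj h2
        have hdc : d ≠ c := by rw [hd_eq]; exact hqc
        have hch : List.Chain' (· ≠ ·) (c :: d :: ω') :=
          List.isChain_cons_cons.mpr ⟨fun h2 => hdc h2.symm, hch1⟩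
        have hval : ((Phi g : (A α)ˣ) : A α) (c :: d :: ω') =
            e * ((Phi h : (A α)ˣ) : A α) (d :: ω') := by
          rw [hPhig, Units.val_mul, mul_apply]
          rw [Finset.sum_eq_single 1]
          · simp only [List.take_succ_cons, List.take_zero, List.drop_succ_cons, List.drop_zero]
            rw [zpow_single]
          · intro i hi hne'
            rcases i with _ | i
            · rw [List.take_zero, List.drop_zero, zpow_nil, one_mul]
              by_contra h0
              have h2 := hsup1 _ h0
              have h3 := length_le_of_instars (d :: ω') (c :: d :: ω') hch h2
              simp only [List.length_cons] at h3
              omega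
            rcases i with _ | k
            · exact absurd rfl hne'
            · by_contra h0
              have hz : ((xi c ^ e : (A α)ˣ) : A α) ((c :: d :: ω').take (k + 2)) ≠ 0 :=
                fun hzz => h0 (by rw [hzz, zero_mul])
              have h2 := zpow_support c e hz
              have hto : (c :: d :: ω').take (k + 2) = c :: d :: ω'.take k := by
                simp [List.take_succ_cons]
              rw [hto] at h2
              rw [List.length_cons, List.length_cons, List.replicate_succ,
                List.replicate_succ] at h2
              injection h2 with _ h3
              injection h3 with h4 _
              exact hdc h4
          · intro hmem
            exfalso
            apply hmem
            rw [Finset.mem_range]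
            simp only [List.length_cons]
            omega
        refine ⟨c :: d :: ω', hch, ?_, ?_, ?_, ?_⟩
        · rw [hval]
          exact mul_ne_zero hene hne1
        · intro w hw
          rw [hPhig, Units.val_mul, mul_apply] at hw
          obtain ⟨i, hi, hterm⟩ := Finset.exists_ne_zero_of_sum_ne_zero hw
          have h1 : ((xi c ^ e : (A α)ˣ) : A α) (w.take i) ≠ 0 :=
            fun h2 => hterm (by rw [h2, zero_mul])
          have h2 : ((Phi h : (A α)ˣ) : A α) (w.drop i) ≠ 0 :=
            fun h3 => hterm (by rw [h3, mul_zero])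
          have e1 := zpow_support c e h1
          exact ⟨(w.take i).length, w.drop i,
            by rw [← e1]; exact (List.take_append_drop i w).symm, hsup1 _ h2⟩
        · exact iff_of_false (by simp) (by rw [hL]; simp)
        · rw [hL]; rfl

def Delta (g : FreeGroup α) : A α := ((Phi g : (A α)ˣ) : A α) - 1

lemma Delta_nil (g : FreeGroup α) : Delta g [] = 0 := by
  rw [Delta, sub_apply, Phi_nil, one_apply_nil, sub_self]

lemma Delta_one : Delta (1 : FreeGroup α) = 0 := by
  rw [Delta, map_one, Units.val_one, sub_self]

lemma Delta_mul (g h : FreeGroup α) :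
    Delta (g * h) = Delta g + Delta h + Delta g * Delta h := by
  simp only [Delta, map_mul, Units.val_mul]
  noncomm_ring

lemma Delta_ne_zero {g : FreeGroup α} (hg : g ≠ 1) : Delta g ≠ 0 := by
  obtain ⟨ω, hch, hne, hsup, hiff, hh⟩ := main_good g.toWord.length g le_rfl
  have hωne : ω ≠ [] := fun h0 => hg (FreeGroup.toWord_eq_nil_iff.mp (hiff.mp h0))
  intro h0
  apply hne
  have h1 := congrFun h0 ω
  rw [Delta, sub_apply, one_apply_ne_nil hωne, sub_zero, zero_apply] at h1
  exact h1

end Main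
end MagnusOrd

/-- A group is left-orderable if it admits a strict total order invariant under
left multiplication. -/
def IsLeftOrderable (G : Type*) [Group G] : Prop :=
  ∃ r : G → G → Prop, IsStrictTotalOrder G r ∧ ∀ f g h : G, r g h → r (f * g) (f * h)

theorem stmt_14 (α : Type*) [Nonempty α] : IsLeftOrderable (FreeGroup α) := by
  letI : DecidableEq α := Classical.decEq α
  refine ⟨fun g h => MagnusOrd.Pos (MagnusOrd.Delta (g⁻¹ * h)),
    { trichotomous := ?_, irrefl := ?_, trans := ?_ }, ?_⟩
  · -- trichotomous
    intro g h hn1 hn2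
    refine (?_ : _ ∨ g = h ∨ _).elim (fun h1 => absurd h1 hn1) (fun h1 => h1.elim id (fun h2 => absurd h2 hn2))
    by_cases hgh : g = h
    · exact Or.inr (Or.inl hgh)
    · have hx : g⁻¹ * h ≠ 1 := fun h0 => hgh (inv_mul_eq_one.mp h0)
      have hx' : (g⁻¹ * h)⁻¹ ≠ 1 := fun h0 => hx (inv_eq_one.mp h0)
      have ha := MagnusOrd.Delta_ne_zero hx
      have hb := MagnusOrd.Delta_ne_zero hx'
      have hab : MagnusOrd.Delta (g⁻¹ * h) + MagnusOrd.Delta ((g⁻¹ * h)⁻¹) +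
          MagnusOrd.Delta (g⁻¹ * h) * MagnusOrd.Delta ((g⁻¹ * h)⁻¹) = 0 := by
        rw [← MagnusOrd.Delta_mul, mul_inv_cancel, MagnusOrd.Delta_one]
      rcases MagnusOrd.pos_or_pos_neg (MagnusOrd.Delta_nil (g⁻¹ * h)) ha with hpa | hna
      · exact Or.inl hpa
      rcases MagnusOrd.pos_or_pos_neg (MagnusOrd.Delta_nil ((g⁻¹ * h)⁻¹)) hb with hpb | hnb
      · right; right
        have : (g⁻¹ * h)⁻¹ = h⁻¹ * g := by rw [mul_inv_rev, inv_inv]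
        rwa [this] at hpb
      · exact absurd hab (MagnusOrd.neg_neg_mul hna hnb)
  · -- irrefl
    intro g hg
    rw [inv_mul_cancel, MagnusOrd.Delta_one] at hg
    exact MagnusOrd.not_pos_zero hg
  · -- trans
    intro g h k hgh hhk
    have hdec : g⁻¹ * k = (g⁻¹ * h) * (h⁻¹ * k) := by
      rw [mul_assoc, ← mul_assoc h, mul_inv_cancel, one_mul]
    rw [hdec, MagnusOrd.Delta_mul]
    exact MagnusOrd.pos_mul_pos hgh hhk
  · -- left invariance
    intro f g h hgh
    have : (f * g)⁻¹ * (f * h) = g⁻¹ * h := by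
      rw [mul_inv_rev, mul_assoc, ← mul_assoc f⁻¹, inv_mul_cancel, one_mul]
    rwa [this]
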